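/- For a soft-reset IF neuron with threshold V > 0, initial potential v(0) ∈ [0, V], and inputs I(t) ∈ [0, V] for all t, the firing rate r(T) = (1/T)∑_{t=1}^T s(t) satisfies |r(T) - (1/(TV))∑_{t=1}^T I(t)| ≤ 1/T for all T ≥ 1. -/

import Mathlib

theorem stmt_11 (V : ℝ) (hV : 0 < V) (v I s : ℕ → ℝ)
    (hs : ∀ t, 1 ≤ t → s t = if V < v (t - 1) + I t then 1 else 0)
    (hv : ∀ t, 1 ≤ t → v t = v (t - 1) + I t - s t * V)
    (hv0 : 0 ≤ v 0 ∧ v 0 ≤ V)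
    (hI : ∀ t, 0 ≤ I t ∧ I t ≤ V)
    (T : ℕ) (hT : 1 ≤ T) :
    |(1 / T : ℝ) * (∑ t ∈ Finset.Icc 1 T, s t) -
        (1 / (T * V)) * ∑ t ∈ Finset.Icc 1 T, I t| ≤ 1 / T := by
  -- invariant: 0 ≤ v t ≤ V
  have hinv : ∀ t, 0 ≤ v t ∧ v t ≤ V := by
    intro t
    induction t with
    | zero => exact hv0
    | succ n ih =>
      have h1 : 1 ≤ n + 1 := Nat.le_add_left 1 n
      have hvn : v (n + 1) = v n + I (n + 1) - s (n + 1) * V := by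
        simpa using hv (n + 1) h1
      have hsn : s (n + 1) = if V < v n + I (n + 1) then 1 else 0 := by
        simpa using hs (n + 1) h1
      rcases hI (n + 1) with ⟨hI0, hI1⟩
      by_cases h : V < v n + I (n + 1)
      · rw [hvn, hsn, if_pos h]
        constructor <;> nlinarith [ih.1, ih.2]
      · rw [hvn, hsn, if_neg h]
        push_neg at h
        constructor <;> nlinarith [ih.1, ih.2]
  -- telescoping
  have htel : ∀ n : ℕ, v n = v 0 + ∑ t ∈ Finset.Icc 1 n, (I t - s t * V) := by
    intro n
    induction n with
    | zero => simp
    | succ m ih =>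
      rw [Finset.sum_Icc_succ_top (Nat.le_add_left 1 m)]
      have := hv (m + 1) (Nat.le_add_left 1 m)
      simp at this
      rw [this, ih]; ring
  have hTpos : (0 : ℝ) < T := by exact_mod_cast hT
  have hsum : ∑ t ∈ Finset.Icc 1 T, (I t - s t * V) = v T - v 0 := by
    rw [htel T]; ring
  have hsplit : (∑ t ∈ Finset.Icc 1 T, I t) - (∑ t ∈ Finset.Icc 1 T, s t) * V
      = v T - v 0 := by
    rw [← hsum, Finset.sum_sub_distrib, Finset.sum_mul]
  have key : (1 / T : ℝ) * (∑ t ∈ Finset.Icc 1 T, s t) -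
      (1 / (T * V)) * ∑ t ∈ Finset.Icc 1 T, I t
      = (v 0 - v T) / (T * V) := by
    field_simp
    linear_combination (-1 : ℝ) * hsplit
  rw [key, abs_div, abs_of_pos (by positivity : (0:ℝ) < T * V)]
  rw [div_le_div_iff₀ (by positivity) hTpos]
  have h1 := hinv T
  have h2 := hv0
  have : |v 0 - v T| ≤ V := abs_sub_le_of_nonneg_of_le h2.1 h2.2 h1.1 h1.2
  nlinarith [this]
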